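/- Let J, B ∈ ℝ. There exists a constant C > 0 such that for all N ≥ 2, ‖ h^{CW}_{1/N} − Q_{1/N}(h₀^{CW}) ‖ ≤ C/N, where ‖·‖ is the operator norm on (ℂ²)^{⊗N}, h^{CW}_{1/N} is the quantum Curie–Weiss Hamiltonian and h₀^{CW}(x,y,z) = −(J z²/2 + B x). -/

import Mathlib

open scoped ComplexConjugate
open MeasureTheory Filter Topology

noncomputable section

/-! ## Setting

`M₂(ℂ)^{⊗N}` is realized as matrices indexed by `Fin N → Fin 2`, acting on
`(ℂ²)^{⊗N} = EuclideanSpace ℂ (Fin N → Fin 2)`. -/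

/-- `M₂(ℂ)^{⊗N}`, realized as matrices indexed by `Fin N → Fin 2`. -/
abbrev TP (N : ℕ) : Type := Matrix (Fin N → Fin 2) (Fin N → Fin 2) ℂ

/-- The Pauli matrices `σ₁, σ₂, σ₃`. -/
def pauli : Fin 3 → Matrix (Fin 2) (Fin 2) ℂ
  | 0 => !![0, 1; 1, 0]
  | 1 => !![0, -Complex.I; Complex.I, 0]
  | 2 => !![1, 0; 0, -1]

/-- The symmetrization operator `S_N` on `M₂(ℂ)^{⊗N}`: the average over all permutations
of the tensor factors. -/
def symmMat (N : ℕ) (A : TP N) : TP N :=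
  (N.factorial : ℂ)⁻¹ • ∑ σ : Equiv.Perm (Fin N), Matrix.of fun i j => A (i ∘ σ) (j ∘ σ)

/-- `b ⊗ I₂^{⊗(N−M)}` (junk value `0` if `M > N`). -/
def embedMat (M N : ℕ) (b : TP M) : TP N :=
  if h : M ≤ N then
    Matrix.of fun i j =>
      b (fun k => i (Fin.castLE h k)) (fun k => j (Fin.castLE h k)) *
        ∏ k ∈ Finset.univ.filter (fun k : Fin N => M ≤ (k : ℕ)),
          (if i k = j k then (1 : ℂ) else 0)
  else 0

/-- `S_{M,N}(b) = S_N(b ⊗ I₂^{⊗(N−M)})`. -/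
def SMN (M N : ℕ) (b : TP M) : TP N := symmMat N (embedMat M N b)

/-- The elementary tensor `σ_{m 0} ⊗ ⋯ ⊗ σ_{m (L-1)}` as a matrix on `(ℂ²)^{⊗L}`. -/
def pauliTensor {L : ℕ} (m : Fin L → Fin 3) : TP L :=
  Matrix.of fun i j => ∏ k, pauli (m k) (i k) (j k)

/-- For a monomial with exponents `d`, the list of its variable indices (first `d 0` copies
of `0`, then `d 1` copies of `1`, then `d 2` copies of `2`). -/
def monFun (d : Fin 3 →₀ ℕ) : Fin (d 0 + d 1 + d 2) → Fin 3 := fun k =>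
  if (k : ℕ) < d 0 then 0 else if (k : ℕ) < d 0 + d 1 then 1 else 2

/-- Quantization of the monomial `x^{d 0} y^{d 1} z^{d 2}`:
`S_{L,N}(σ_{j₁} ⊗ ⋯ ⊗ σ_{j_L})` if `L ≤ N`, and `0` if `L > N`. -/
def Qmon (N : ℕ) (d : Fin 3 →₀ ℕ) : TP N :=
  SMN (d 0 + d 1 + d 2) N (pauliTensor (monFun d))

/-- The quantization map `Q_{1/N}`: the linear extension of `Qmon` to all complex
polynomials in the three real variables `x, y, z`. -/
def Q (N : ℕ) (p : MvPolynomial (Fin 3) ℂ) : TP N :=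
  ∑ d ∈ p.support, p.coeff d • Qmon N d

/-- The symmetric subspace `Sym^N(ℂ²) ⊆ (ℂ²)^{⊗N}` (the fixed points of the permutation
action, i.e. the range of the vector symmetrizer). -/
def SymSub (N : ℕ) : Submodule ℂ (EuclideanSpace ℂ (Fin N → Fin 2)) where
  carrier := {v | ∀ σ : Equiv.Perm (Fin N), ∀ i, v (i ∘ σ) = v i}
  add_mem' := by
    intro a b ha hb σ i
    have : (a + b) (i ∘ σ) = a (i ∘ σ) + b (i ∘ σ) := rfl
    rw [this, ha σ i, hb σ i]; rfl
  zero_mem' := by intro σ i; rfl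
  smul_mem' := by
    intro c v hv σ i
    have : (c • v) (i ∘ σ) = c • (v (i ∘ σ)) := rfl
    rw [this, hv σ i]; rfl

/-- The vector symmetrizer. -/
def symVec (N : ℕ) (v : EuclideanSpace ℂ (Fin N → Fin 2)) :
    EuclideanSpace ℂ (Fin N → Fin 2) :=
  WithLp.toLp 2 (fun i => (N.factorial : ℂ)⁻¹ * ∑ σ : Equiv.Perm (Fin N), v (i ∘ σ))

lemma symVec_mem (N : ℕ) (v : EuclideanSpace ℂ (Fin N → Fin 2)) :
    symVec N v ∈ SymSub N := by
  intro τ i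
  show (N.factorial : ℂ)⁻¹ * ∑ σ : Equiv.Perm (Fin N), v ((i ∘ τ) ∘ σ)
      = (N.factorial : ℂ)⁻¹ * ∑ σ : Equiv.Perm (Fin N), v (i ∘ σ)
  congr 1
  exact Fintype.sum_equiv (Equiv.mulLeft τ) _ _ (fun σ => by rfl)

/-- The vector symmetrizer as a linear map onto the symmetric subspace. -/
def symProj (N : ℕ) : EuclideanSpace ℂ (Fin N → Fin 2) →ₗ[ℂ] SymSub N where
  toFun v := ⟨symVec N v, symVec_mem N v⟩
  map_add' v w := by
    apply Subtype.ext
    apply WithLp.ofLp_injective 2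
    funext i
    show (N.factorial : ℂ)⁻¹ * ∑ σ : Equiv.Perm (Fin N), (v + w) (i ∘ σ) = _
    have h : ∀ σ : Equiv.Perm (Fin N), (v + w) (i ∘ σ) = v (i ∘ σ) + w (i ∘ σ) :=
      fun _ => rfl
    simp only [h, Finset.sum_add_distrib]
    show _ = (N.factorial : ℂ)⁻¹ * (∑ σ : Equiv.Perm (Fin N), v (i ∘ σ))
        + (N.factorial : ℂ)⁻¹ * (∑ σ : Equiv.Perm (Fin N), w (i ∘ σ))
    ring
  map_smul' c v := by
    apply Subtype.ext
    apply WithLp.ofLp_injective 2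
    funext i
    show (N.factorial : ℂ)⁻¹ * ∑ σ : Equiv.Perm (Fin N), (c • v) (i ∘ σ) = _
    have h : ∀ σ : Equiv.Perm (Fin N), (c • v) (i ∘ σ) = c * v (i ∘ σ) := fun _ => rfl
    simp only [h, ← Finset.mul_sum]
    show _ = c * ((N.factorial : ℂ)⁻¹ * (∑ σ : Equiv.Perm (Fin N), v (i ∘ σ)))
    ring

/-- The restriction (compression) of a matrix `A` on `(ℂ²)^{⊗N}` to the symmetric subspace
`Sym^N(ℂ²)`, as a continuous linear operator; when `A` leaves `Sym^N(ℂ²)` invariant (as do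
all operators considered here) this is exactly the restriction `A|_{Sym^N(ℂ²)}`. -/
def restrSym (N : ℕ) (A : TP N) : SymSub N →L[ℂ] SymSub N :=
  LinearMap.toContinuousLinearMap
    ((symProj N) ∘ₗ (Matrix.toEuclideanLin A) ∘ₗ (SymSub N).subtype)

/-- The unit sphere `S² ⊂ ℝ³`. -/
abbrev S2 : Type := Metric.sphere (0 : EuclideanSpace ℝ (Fin 3)) 1

/-- Spherical coordinates `(θ, φ) ↦ (sin θ cos φ, sin θ sin φ, cos θ)`. -/
def sphCoord (a : ℝ × ℝ) : EuclideanSpace ℝ (Fin 3) :=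
  WithLp.toLp 2 ![Real.sin a.1 * Real.cos a.2, Real.sin a.1 * Real.sin a.2, Real.cos a.1]

lemma sphCoord_mem (a : ℝ × ℝ) :
    sphCoord a ∈ Metric.sphere (0 : EuclideanSpace ℝ (Fin 3)) 1 := by
  have h : ‖sphCoord a‖ = 1 := by
    rw [EuclideanSpace.norm_eq]
    have : ∑ i : Fin 3, sphCoord a i ^ 2 = 1 := by
      have hs := Real.sin_sq_add_cos_sq a.1
      have hc := Real.sin_sq_add_cos_sq a.2
      simp [sphCoord, Fin.sum_univ_three]
      nlinarith [hs, hc]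
    have h2 : ∀ i : Fin 3, ‖sphCoord a i‖ ^ 2 = sphCoord a i ^ 2 := fun i => sq_abs _
    simp only [h2, this]
    exact Real.sqrt_one
  simpa [mem_sphere_iff_norm] using h

/-- The standard surface measure `dΩ` on `S²` (of total mass `4π`), realized as the
push-forward of `sin θ dθ dφ` on `[0,π] × (−π,π]` under spherical coordinates. -/
def μS2 : Measure S2 :=
  Measure.map (fun a : ℝ × ℝ => (⟨sphCoord a, sphCoord_mem a⟩ : S2))
    (((volume : Measure (ℝ × ℝ)).restrict
        (Set.Icc (0 : ℝ) Real.pi ×ˢ Set.Ioc (-Real.pi) Real.pi)).withDensity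
      fun a => ENNReal.ofReal (Real.sin a.1))

/-- The polar angle `θ ∈ [0, π]` of a point of `S²`. -/
def thetaOf (Ω : S2) : ℝ := Real.arccos ((Ω : EuclideanSpace ℝ (Fin 3)) 2)

/-- The azimuthal angle `φ ∈ (−π, π]` of a point of `S²`. -/
def phiOf (Ω : S2) : ℝ :=
  Complex.arg (((Ω : EuclideanSpace ℝ (Fin 3)) 0 : ℂ) +
    ((Ω : EuclideanSpace ℝ (Fin 3)) 1 : ℂ) * Complex.I)

/-- The coherent spin state `|Ω⟩₁ = cos(θ/2) e₁ + e^{iφ} sin(θ/2) e₂ ∈ ℂ²`. -/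
def cs1 (Ω : S2) : Fin 2 → ℂ :=
  ![(Real.cos (thetaOf Ω / 2) : ℂ),
    Complex.exp (Complex.I * (phiOf Ω : ℂ)) * (Real.sin (thetaOf Ω / 2) : ℂ)]

/-- The `N`-fold coherent spin state `|Ω⟩_N = |Ω⟩₁^{⊗N} ∈ (ℂ²)^{⊗N}`. -/
def csN (N : ℕ) (Ω : S2) : EuclideanSpace ℂ (Fin N → Fin 2) :=
  WithLp.toLp 2 (fun i => ∏ k, cs1 Ω (i k))

/-- The matrix of the weak integral `((N+1)/(4π)) ∫_{S²} f(Ω) |Ω⟩⟨Ω|_N dΩ` on `(ℂ²)^{⊗N}`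
(entrywise Bochner integral, which in finite dimension coincides with the weak integral). -/
def Q'mat (N : ℕ) (f : S2 → ℂ) : TP N :=
  Matrix.of fun i j =>
    ((N + 1 : ℂ) / (4 * (Real.pi : ℂ))) * ∫ Ω, f Ω * csN N Ω i * conj (csN N Ω j) ∂μS2

/-- The coherent-state (Berezin) quantization map `Q'_{1/N}`, as an operator on
`Sym^N(ℂ²)` (the range of `|Ω⟩⟨Ω|_N` lies in `Sym^N(ℂ²)`, so the compression coincides
with the operator defined by the weak integral). -/
def Q' (N : ℕ) (f : S2 → ℂ) : SymSub N →L[ℂ] SymSub N := restrSym N (Q'mat N f)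

/-- The restriction of a polynomial (in three real variables) to the unit sphere `S²`. -/
def restrictS2 (p : MvPolynomial (Fin 3) ℂ) : S2 → ℂ :=
  fun Ω => MvPolynomial.eval (fun i => ((Ω : EuclideanSpace ℝ (Fin 3)) i : ℂ)) p

/-- The restriction to `S²` as a linear map. -/
def restrictS2Lin : MvPolynomial (Fin 3) ℂ →ₗ[ℂ] (S2 → ℂ) where
  toFun := restrictS2
  map_add' p q := by funext Ω; simp [restrictS2]
  map_smul' c p := by funext Ω; simp [restrictS2]

/-- `P_N(S²)`: the space of restrictions to `S²` of complex polynomials of degree `≤ N`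
in three real variables. -/
def PNS2 (N : ℕ) : Submodule ℂ (S2 → ℂ) where
  carrier := {g | ∃ p : MvPolynomial (Fin 3) ℂ, p.totalDegree ≤ N ∧ g = restrictS2 p}
  add_mem' := by
    rintro a b ⟨p, hp, rfl⟩ ⟨q, hq, rfl⟩
    exact ⟨p + q, le_trans (MvPolynomial.totalDegree_add p q) (by omega),
      by funext Ω; simp [restrictS2]⟩
  zero_mem' := ⟨0, by simp, by funext Ω; simp [restrictS2]⟩
  smul_mem' := by
    rintro c a ⟨p, hp, rfl⟩
    exact ⟨c • p, le_trans (MvPolynomial.totalDegree_smul_le c p) hp,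
      by funext Ω; simp [restrictS2]⟩

/-- The `N`-fold tensor power `U^{⊗N}` of a `2×2` matrix, on `(ℂ²)^{⊗N}`. -/
def tpow (N : ℕ) (U : Matrix (Fin 2) (Fin 2) ℂ) : TP N :=
  Matrix.of fun i j => ∏ k, U (i k) (j k)

/-- `σ_k(j) = I₂ ⊗ ⋯ ⊗ σ_k ⊗ ⋯ ⊗ I₂` with the Pauli matrix `σ_k` in the `j`-th slot. -/
def pauliAt (N : ℕ) (k : Fin 3) (j : Fin N) : TP N :=
  Matrix.of fun a b =>
    pauli k (a j) (b j) *
      ∏ t ∈ Finset.univ.filter (fun t : Fin N => t ≠ j), (if a t = b t then (1 : ℂ) else 0)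

/-- The quantum Curie–Weiss Hamiltonian
`h^{CW}_{1/N} = (1/N)( −(J/(2N)) Σ_{i,j} σ₃(i)σ₃(j) − B Σ_j σ₁(j))`. -/
def hCW (J B : ℝ) (N : ℕ) : TP N :=
  ((N : ℂ))⁻¹ • ((-(J / (2 * N)) : ℂ) • ∑ i : Fin N, ∑ j : Fin N,
      pauliAt N 2 i * pauliAt N 2 j
    + (-(B : ℂ)) • ∑ j : Fin N, pauliAt N 0 j)

open scoped Classical in
/-- The action of a (special orthogonal) matrix on the unit sphere `S²`
(junk value if the image does not lie on the sphere). -/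
def rotAct (R : Matrix (Fin 3) (Fin 3) ℝ) (Ω : S2) : S2 :=
  if h : (WithLp.toLp 2 (R.mulVec (Ω : EuclideanSpace ℝ (Fin 3))) : EuclideanSpace ℝ (Fin 3)) ∈
      Metric.sphere (0 : EuclideanSpace ℝ (Fin 3)) 1
  then ⟨WithLp.toLp 2 (R.mulVec (Ω : EuclideanSpace ℝ (Fin 3))), h⟩ else Ω

/-- A polynomial in three variables is harmonic if its Laplacian vanishes. -/
def IsHarmonic (p : MvPolynomial (Fin 3) ℂ) : Prop :=
  ∑ i : Fin 3, MvPolynomial.pderiv i (MvPolynomial.pderiv i p) = 0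

/-- The polynomial `x² + y² + z² − 1`. -/
def sphPoly : MvPolynomial (Fin 3) ℂ :=
  MvPolynomial.X 0 ^ 2 + MvPolynomial.X 1 ^ 2 + MvPolynomial.X 2 ^ 2 - 1

/-- The Dicke state `|k, N−k⟩ ∈ Sym^N(ℂ²)`: `binom(N,k)^{-1/2}` times the sum of all
elementary tensors with exactly `k` factors `e₂` (and `N−k` factors `e₁`). -/
def dicke (N k : ℕ) : EuclideanSpace ℂ (Fin N → Fin 2) :=
  WithLp.toLp 2 (fun i => if (Finset.univ.filter fun t => i t = 1).card = k
    then ((Real.sqrt (N.choose k) : ℂ))⁻¹ else 0)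

/-- The operator norm of a matrix acting on `(ℂ²)^{⊗N}` with its Euclidean (ℓ²) norm. -/
def matOpNorm {N : ℕ} (A : TP N) : ℝ :=
  ‖LinearMap.toContinuousLinearMap (Matrix.toEuclideanLin A)‖

/-- The classical Curie–Weiss Hamiltonian `h₀^{CW}(x,y,z) = −(J z²/2 + B x)` as a
polynomial in three real variables. -/
def hCW0 (J B : ℝ) : MvPolynomial (Fin 3) ℂ :=
  -(MvPolynomial.C ((J : ℂ) / 2) * MvPolynomial.X 2 ^ 2 +
    MvPolynomial.C (B : ℂ) * MvPolynomial.X 0)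

namespace CWAux

open Finset

lemma perm_sum_zero {n : ℕ} (f : Fin (n+1) → ℂ) :
    ∑ σ : Equiv.Perm (Fin (n+1)), f (σ 0) = (n.factorial : ℂ) * ∑ p, f p := by
  rw [← Equiv.sum_comp (Equiv.Perm.decomposeFin).symm (fun σ => f (σ 0)), Fintype.sum_prod_type]
  simp only [Equiv.Perm.decomposeFin_symm_apply_zero, Finset.sum_const, Fintype.card_perm,
    Finset.card_univ, nsmul_eq_mul, Fintype.card_fin]
  rw [← Finset.mul_sum]

lemma sum_swap_succ {n : ℕ} (h : Fin (n+2) → ℂ) (p : Fin (n+2)) :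
    ∑ q : Fin (n+1), h (Equiv.swap 0 p q.succ) = (∑ b, h b) - h p := by
  have h1 : ∑ b : Fin (n+2), h (Equiv.swap 0 p b) = ∑ b, h b :=
    Equiv.sum_comp (Equiv.swap 0 p) h
  rw [Fin.sum_univ_succ] at h1
  simp only [Equiv.swap_apply_left] at h1
  linear_combination h1

lemma perm_sum_zero_one {n : ℕ} (g h : Fin (n+2) → ℂ) :
    ∑ σ : Equiv.Perm (Fin (n+2)), g (σ 0) * h (σ 1) =
      (n.factorial : ℂ) * ((∑ p, g p) * (∑ p, h p) - ∑ p, g p * h p) := by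
  rw [← Equiv.sum_comp (Equiv.Perm.decomposeFin).symm
    (fun σ => g (σ 0) * h (σ 1)), Fintype.sum_prod_type]
  have h1 : ∀ (p : Fin (n+2)) (τ : Equiv.Perm (Fin (n+1))),
      (Equiv.Perm.decomposeFin.symm (p, τ)) 1 = Equiv.swap 0 p ((τ 0).succ) := by
    intro p τ
    rw [show (1 : Fin (n+2)) = (0 : Fin (n+1)).succ by rfl]
    exact Equiv.Perm.decomposeFin_symm_apply_succ τ p 0
  simp only [Equiv.Perm.decomposeFin_symm_apply_zero, h1]
  have h2 : ∀ p : Fin (n+2), ∑ τ : Equiv.Perm (Fin (n+1)),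
      g p * h (Equiv.swap 0 p ((τ 0).succ))
      = g p * ((n.factorial : ℂ) * ((∑ b, h b) - h p)) := by
    intro p
    rw [← Finset.mul_sum, perm_sum_zero (fun q => h (Equiv.swap 0 p q.succ)), sum_swap_succ]
  simp only [h2]
  have h3 : ∀ x : Fin (n+2), g x * ((n.factorial:ℂ) * ((∑ b, h b) - h x))
      = (n.factorial:ℂ) * (∑ b, h b) * g x - (n.factorial:ℂ) * (g x * h x) := fun x => by ring
  simp only [h3, Finset.sum_sub_distrib, ← Finset.mul_sum]
  ring


/-- real sign function -/
def eR : Fin 2 → ℝ := fun x => if x = 0 then 1 else -1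

def eC : Fin 2 → ℂ := fun x => ((eR x : ℝ) : ℂ)

lemma pauli2_apply (x y : Fin 2) : pauli 2 x y = if x = y then eC x else 0 := by
  fin_cases x <;> fin_cases y <;> simp [pauli, eC, eR]

lemma pauli0_apply (x y : Fin 2) : pauli 0 x y = if x = y then 0 else 1 := by
  fin_cases x <;> fin_cases y <;> simp [pauli]

lemma symmMat_apply (N : ℕ) (A : TP N) (i j : Fin N → Fin 2) :
    symmMat N A i j = (N.factorial : ℂ)⁻¹ *
      ∑ σ : Equiv.Perm (Fin N), A (i ∘ σ) (j ∘ σ) := by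
  simp [symmMat, Matrix.smul_apply, Matrix.sum_apply]

lemma embedMat_apply_le {M N : ℕ} (h : M ≤ N) (b : TP M) (a c : Fin N → Fin 2) :
    embedMat M N b a c = b (fun k => a (Fin.castLE h k)) (fun k => c (Fin.castLE h k)) *
      ∏ k ∈ Finset.univ.filter (fun k : Fin N => M ≤ (k : ℕ)),
        (if a k = c k then (1 : ℂ) else 0) := by
  simp [embedMat, h]

lemma filter_two_le (n : ℕ) :
    Finset.univ.filter (fun k : Fin (n+2) => 2 ≤ (k : ℕ))
      = (Finset.univ.erase 0).erase 1 := by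
  ext k
  simp only [Finset.mem_filter, Finset.mem_univ, true_and, Finset.mem_erase, ne_eq, Fin.ext_iff,
    and_true]
  have h0 : ((0 : Fin (n+2)) : ℕ) = 0 := rfl
  have h1 : ((1 : Fin (n+2)) : ℕ) = 1 := rfl
  omega

lemma prod_split_two (n : ℕ) (f : Fin (n+2) → ℂ) :
    ∏ k, f k = f 0 * (f 1 * ∏ k ∈ (Finset.univ.erase 0).erase 1, f k) := by
  rw [Finset.mul_prod_erase _ f (by simp [Finset.mem_erase, Fin.ext_iff]),
    Finset.mul_prod_erase _ f (Finset.mem_univ 0)]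

lemma ite_mul_delta (P : Prop) [Decidable P] (x : ℂ) :
    (if P then x else 0) = x * (if P then 1 else 0) := by
  split_ifs <;> simp

lemma comp_eq_iff {N : ℕ} (σ : Equiv.Perm (Fin N)) (i j : Fin N → Fin 2) :
    i ∘ σ = j ∘ σ ↔ i = j := by
  constructor
  · intro h
    funext t
    have := congrFun h (σ.symm t)
    simpa using this
  · rintro rfl; rfl

lemma prod_delta {N : ℕ} (i j : Fin N → Fin 2) :
    (∏ k : Fin N, if i k = j k then (1 : ℂ) else 0) = if i = j then 1 else 0 := by
  rw [Finset.prod_boole]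
  simp [funext_iff]

lemma eC_sq (x : Fin 2) : CWAux.eC x * CWAux.eC x = 1 := by
  fin_cases x <;> norm_num [CWAux.eC, CWAux.eR]

lemma embed_two (n : ℕ) {L : ℕ} (hL : L = 2) (m : Fin L → Fin 3) (hm : ∀ k, m k = 2)
    (a b : Fin (n+2) → Fin 2) :
    embedMat L (n+2) (pauliTensor m) a b
      = eC (a 0) * eC (a 1) * (if a = b then 1 else 0) := by
  subst hL
  rw [embedMat_apply_le (by omega)]
  have hc0 : Fin.castLE (show 2 ≤ n+2 by omega) (0 : Fin 2) = (0 : Fin (n+2)) := rfl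
  have hc1 : Fin.castLE (show 2 ≤ n+2 by omega) (1 : Fin 2) = (1 : Fin (n+2)) := rfl
  have hpt : pauliTensor m (fun k => a (Fin.castLE (by omega) k))
      (fun k => b (Fin.castLE (by omega) k))
      = (eC (a 0) * (if a 0 = b 0 then 1 else 0)) *
        (eC (a 1) * (if a 1 = b 1 then 1 else 0)) := by
    simp only [pauliTensor, Matrix.of_apply, hm, Fin.prod_univ_two, hc0, hc1,
      pauli2_apply]
    split_ifs <;> ring
  rw [hpt, filter_two_le]
  rw [show eC (a 0) * (if a 0 = b 0 then (1:ℂ) else 0) *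
      (eC (a 1) * (if a 1 = b 1 then (1:ℂ) else 0)) *
      ∏ k ∈ (Finset.univ.erase 0).erase 1, (if a k = b k then (1:ℂ) else 0)
    = eC (a 0) * eC (a 1) * ((if a 0 = b 0 then (1:ℂ) else 0) *
      ((if a 1 = b 1 then (1:ℂ) else 0) *
      ∏ k ∈ (Finset.univ.erase 0).erase 1, (if a k = b k then (1:ℂ) else 0))) by ring]
  rw [← prod_split_two n (fun k => if a k = b k then (1:ℂ) else 0), prod_delta]

lemma SMN_two (n : ℕ) {L : ℕ} (hL : L = 2) (m : Fin L → Fin 3) (hm : ∀ k, m k = 2) :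
    SMN L (n+2) (pauliTensor m) = Matrix.diagonal
      (fun i => ((∑ a, eC (i a))^2 - ((n:ℂ)+2)) / (((n:ℂ)+2) * ((n:ℂ)+1))) := by
  ext i j
  rw [SMN, symmMat_apply]
  have hterm : ∀ σ : Equiv.Perm (Fin (n+2)),
      embedMat L (n+2) (pauliTensor m) (i ∘ σ) (j ∘ σ)
      = eC (i (σ 0)) * eC (i (σ 1)) * (if i = j then 1 else 0) := by
    intro σ
    rw [embed_two n hL m hm]
    simp [comp_eq_iff]
  simp only [hterm]
  rcases eq_or_ne i j with rfl | hij
  · simp only [if_pos rfl, eq_self_iff_true, if_true, mul_one, Matrix.diagonal_apply_eq]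
    rw [perm_sum_zero_one (fun p => eC (i p)) (fun p => eC (i p))]
    have hsq : ∑ p : Fin (n+2), eC (i p) * eC (i p) = ((n:ℂ)+2) := by
      simp only [eC_sq]
      simp
    rw [hsq, ← sq]
    have hfac : ((n+2).factorial : ℂ) = ((n:ℂ)+2) * (((n:ℂ)+1) * (n.factorial : ℂ)) := by
      rw [Nat.factorial_succ, Nat.factorial_succ]
      push_cast
      ring
    rw [hfac]
    have h1 : ((n:ℂ)+2) ≠ 0 := by
      intro h
      have := congrArg Complex.re h
      simp at this
      linarith [Nat.cast_nonneg (α := ℝ) n, this]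
    have h2 : ((n:ℂ)+1) ≠ 0 := by
      intro h
      have := congrArg Complex.re h
      simp at this
      linarith [Nat.cast_nonneg (α := ℝ) n, this]
    have h3 : (n.factorial : ℂ) ≠ 0 := by
      exact_mod_cast Nat.cast_ne_zero.mpr (Nat.factorial_ne_zero n)
    field_simp
  · simp [hij, Matrix.diagonal_apply_ne _ hij]

lemma filter_one_le (n : ℕ) :
    Finset.univ.filter (fun k : Fin (n+1) => 1 ≤ (k : ℕ)) = Finset.univ.erase 0 := by
  ext k
  simp only [Finset.mem_filter, Finset.mem_univ, true_and, Finset.mem_erase, ne_eq, Fin.ext_iff,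
    and_true]
  have h0 : ((0 : Fin (n+1)) : ℕ) = 0 := rfl
  omega

lemma pauliAt_apply (N : ℕ) (k : Fin 3) (t : Fin N) (a b : Fin N → Fin 2) :
    pauliAt N k t a b = pauli k (a t) (b t) *
      ∏ s ∈ Finset.univ.erase t, (if a s = b s then (1:ℂ) else 0) := by
  simp [pauliAt, Finset.filter_ne']

lemma embed_one (n : ℕ) {L : ℕ} (hL : L = 1) (m : Fin L → Fin 3) (hm : ∀ k, m k = 0)
    (a b : Fin (n+1) → Fin 2) :
    embedMat L (n+1) (pauliTensor m) a b
      = pauli 0 (a 0) (b 0) * ∏ s ∈ Finset.univ.erase 0, (if a s = b s then (1:ℂ) else 0) := by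
  subst hL
  rw [embedMat_apply_le (by omega), filter_one_le]
  congr 1
  have hc0 : Fin.castLE (show 1 ≤ n+1 by omega) (0 : Fin 1) = (0 : Fin (n+1)) := rfl
  simp only [pauliTensor, Matrix.of_apply, hm, Fin.prod_univ_one, hc0]

lemma erase_reindex {n : ℕ} (σ : Equiv.Perm (Fin (n+1))) (F : Fin (n+1) → ℂ) :
    ∏ k ∈ Finset.univ.erase 0, F (σ k) = ∏ s ∈ Finset.univ.erase (σ 0), F s := by
  rw [show (Finset.univ.erase (σ 0)) = (Finset.univ.erase 0).map σ.toEmbedding by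
    rw [Finset.map_erase]
    congr 1
    simp]
  rw [Finset.prod_map]
  rfl

lemma SMN_one (n : ℕ) {L : ℕ} (hL : L = 1) (m : Fin L → Fin 3) (hm : ∀ k, m k = 0) :
    SMN L (n+1) (pauliTensor m) = (((n:ℂ)+1))⁻¹ • ∑ t, pauliAt (n+1) 0 t := by
  ext i j
  rw [SMN, symmMat_apply]
  have hterm : ∀ σ : Equiv.Perm (Fin (n+1)),
      embedMat L (n+1) (pauliTensor m) (i ∘ σ) (j ∘ σ)
      = pauliAt (n+1) 0 (σ 0) i j := by
    intro σ
    rw [embed_one n hL m hm, pauliAt_apply]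
    simp only [Function.comp_apply]
    congr 1
    exact erase_reindex σ (fun s => if i s = j s then (1:ℂ) else 0)
  simp only [hterm]
  rw [perm_sum_zero (fun t => pauliAt (n+1) 0 t i j)]
  have hfac : ((n+1).factorial : ℂ) = ((n:ℂ)+1) * (n.factorial : ℂ) := by
    rw [Nat.factorial_succ]; push_cast; ring
  rw [hfac]
  have h2 : ((n:ℂ)+1) ≠ 0 := by
    intro h
    have := congrArg Complex.re h
    simp at this
    linarith [Nat.cast_nonneg (α := ℝ) n, this]
  have h3 : (n.factorial : ℂ) ≠ 0 := by
    exact_mod_cast Nat.cast_ne_zero.mpr (Nat.factorial_ne_zero n)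
  have hR : ((((n:ℂ)+1))⁻¹ • ∑ t, pauliAt (n+1) 0 t) i j
      = (((n:ℂ)+1))⁻¹ * ∑ t, pauliAt (n+1) 0 t i j := by
    simp [Matrix.smul_apply, Matrix.sum_apply]
  rw [hR, mul_inv]
  field_simp

lemma pauliAt_diag (N : ℕ) (t : Fin N) :
    pauliAt N 2 t = Matrix.diagonal (fun i : Fin N → Fin 2 => eC (i t)) := by
  ext i j
  rw [pauliAt_apply, pauli2_apply, ite_mul_delta]
  rw [show eC (i t) * (if i t = j t then (1:ℂ) else 0) *
      ∏ s ∈ Finset.univ.erase t, (if i s = j s then (1:ℂ) else 0)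
    = eC (i t) * ((if i t = j t then (1:ℂ) else 0) *
      ∏ s ∈ Finset.univ.erase t, (if i s = j s then (1:ℂ) else 0)) by ring]
  rw [Finset.mul_prod_erase _ (fun s => if i s = j s then (1:ℂ) else 0) (Finset.mem_univ t),
    prod_delta]
  rcases eq_or_ne i j with rfl | hij
  · simp
  · simp [hij, Matrix.diagonal_apply_ne _ hij]

lemma ZZ_sum (N : ℕ) :
    ∑ a : Fin N, ∑ b : Fin N, pauliAt N 2 a * pauliAt N 2 b
      = Matrix.diagonal (fun i : Fin N → Fin 2 => (∑ a, eC (i a))^2) := by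
  simp only [pauliAt_diag, Matrix.diagonal_mul_diagonal]
  ext i j
  rcases eq_or_ne i j with rfl | hij
  · simp only [Matrix.sum_apply, Matrix.diagonal_apply_eq]
    rw [sq, Finset.sum_mul_sum]
  · simp [Matrix.sum_apply, Matrix.diagonal_apply_ne _ hij]

def dzF : Fin 3 →₀ ℕ := Finsupp.single 2 2
def dxF : Fin 3 →₀ ℕ := Finsupp.single 0 1

lemma hCW0_eq (J B : ℝ) : hCW0 J B =
    MvPolynomial.monomial dzF (-((J:ℂ)/2)) + MvPolynomial.monomial dxF (-(B:ℂ)) := by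
  rw [hCW0, dzF, dxF, show (MvPolynomial.X 0 : MvPolynomial (Fin 3) ℂ) = MvPolynomial.X 0 ^ 1
    from (pow_one _).symm, MvPolynomial.C_mul_X_pow_eq_monomial,
    MvPolynomial.C_mul_X_pow_eq_monomial, neg_add, ← map_neg, ← map_neg]

lemma dz_ne_dx : dzF ≠ dxF := by
  intro h
  have := DFunLike.congr_fun h 0
  simp [dzF, dxF, Finsupp.single_apply] at this

lemma Q_hCW0 (J B : ℝ) (N : ℕ) :
    Q N (hCW0 J B) = (-((J:ℂ)/2)) • Qmon N dzF + (-(B:ℂ)) • Qmon N dxF := by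
  have hcz : (hCW0 J B).coeff dzF = -((J:ℂ)/2) := by
    rw [hCW0_eq]
    simp [MvPolynomial.coeff_add, MvPolynomial.coeff_monomial, dz_ne_dx, dz_ne_dx.symm]
  have hcx : (hCW0 J B).coeff dxF = -(B:ℂ) := by
    rw [hCW0_eq]
    simp [MvPolynomial.coeff_add, MvPolynomial.coeff_monomial, dz_ne_dx, dz_ne_dx.symm]
  have hsup : (hCW0 J B).support ⊆ {dzF, dxF} := by
    rw [hCW0_eq]
    refine (MvPolynomial.support_add).trans ?_
    refine Finset.union_subset ?_ ?_
    · exact (MvPolynomial.support_monomial_subset).trans (by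
        intro d hd; simp only [Finset.mem_singleton] at hd; subst hd
        exact Finset.mem_insert_self _ _)
    · exact (MvPolynomial.support_monomial_subset).trans (by
        intro d hd; simp only [Finset.mem_singleton] at hd; subst hd
        exact Finset.mem_insert_of_mem (Finset.mem_singleton_self _))
  rw [Q]
  rw [Finset.sum_subset hsup (fun d _ hd => by
    rw [MvPolynomial.notMem_support_iff.mp hd, zero_smul])]
  rw [Finset.sum_pair dz_ne_dx, hcz, hcx]

lemma Qmon_dzF (n : ℕ) : Qmon (n+2) dzF = Matrix.diagonal
    (fun i => ((∑ a, eC (i a))^2 - ((n:ℂ)+2)) / (((n:ℂ)+2) * ((n:ℂ)+1))) := by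
  rw [Qmon]
  exact SMN_two n (by simp [dzF, Finsupp.single_apply])
    _ (fun k => by simp [monFun, dzF, Finsupp.single_apply])

lemma Qmon_dxF (n : ℕ) : Qmon (n+1) dxF = (((n:ℂ)+1))⁻¹ • ∑ t, pauliAt (n+1) 0 t := by
  rw [Qmon]
  refine SMN_one n (by simp [dxF, Finsupp.single_apply]) _ (fun k => ?_)
  have hsum : dxF 0 + dxF 1 + dxF 2 = 1 := by simp [dxF, Finsupp.single_apply]
  have hk : (k : ℕ) < 1 := by have := k.isLt; omega
  simp only [monFun]
  rw [if_pos (show (k : ℕ) < dxF 0 by simpa [dxF, Finsupp.single_apply] using hk)]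

lemma diff_diag (J B : ℝ) (n : ℕ) :
    hCW J B (n+2) - Q (n+2) (hCW0 J B) = Matrix.diagonal
      (fun i => ((J:ℂ)/2) * (((∑ a, eC (i a))^2 - ((n:ℂ)+2)^2) / (((n:ℂ)+2)^2 * ((n:ℂ)+1)))) := by
  have hx : Qmon (n+2) dxF = (((n:ℂ)+2))⁻¹ • ∑ t : Fin (n+2), pauliAt (n+2) 0 t := by
    have h := Qmon_dxF (n+1)
    push_cast at h
    rw [show (n:ℂ)+1+1 = (n:ℂ)+2 from by ring] at h
    exact h
  rw [hCW, Q_hCW0, Qmon_dzF, hx, ZZ_sum]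
  have h1 : ((n:ℂ)+2) ≠ 0 := by
    intro h
    have := congrArg Complex.re h
    simp at this
    linarith [Nat.cast_nonneg (α := ℝ) n, this]
  have h2 : ((n:ℂ)+1) ≠ 0 := by
    intro h
    have := congrArg Complex.re h
    simp at this
    linarith [Nat.cast_nonneg (α := ℝ) n, this]
  ext i j
  push_cast
  rcases eq_or_ne i j with rfl | hij
  · simp only [Matrix.sub_apply, Matrix.add_apply, Matrix.smul_apply, Matrix.sum_apply,
      Matrix.diagonal_apply_eq, smul_eq_mul]
    field_simp
    ring
  · simp only [Matrix.sub_apply, Matrix.add_apply, Matrix.smul_apply, Matrix.sum_apply,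
      Matrix.diagonal_apply_ne _ hij, smul_eq_mul]
    ring

lemma matOpNorm_diagonal_le {N : ℕ} (g : (Fin N → Fin 2) → ℂ) (c : ℝ) (hc : 0 ≤ c)
    (h : ∀ i, ‖g i‖ ≤ c) : matOpNorm (Matrix.diagonal g) ≤ c := by
  rw [matOpNorm]
  refine ContinuousLinearMap.opNorm_le_bound _ hc (fun v => ?_)
  have hw : ∀ i, ((LinearMap.toContinuousLinearMap
      (Matrix.toEuclideanLin (Matrix.diagonal g))) v) i = g i * v i := by
    intro i
    show ((Matrix.toEuclideanLin (Matrix.diagonal g)) v) i = g i * v i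
    rw [Matrix.toEuclideanLin_apply]
    exact Matrix.mulVec_diagonal g _ i
  set w := (LinearMap.toContinuousLinearMap (Matrix.toEuclideanLin (Matrix.diagonal g))) v
  have key : ‖w‖^2 ≤ (c * ‖v‖)^2 := by
    rw [EuclideanSpace.norm_eq, Real.sq_sqrt (Finset.sum_nonneg fun i _ => sq_nonneg _)]
    have hvn : ‖v‖^2 = ∑ i, ‖v i‖^2 := by
      rw [EuclideanSpace.norm_eq, Real.sq_sqrt (Finset.sum_nonneg fun i _ => sq_nonneg _)]
    rw [mul_pow, hvn, Finset.mul_sum]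
    refine Finset.sum_le_sum (fun i _ => ?_)
    rw [hw i, norm_mul, mul_pow]
    have := pow_le_pow_left₀ (norm_nonneg (g i)) (h i) 2
    nlinarith [sq_nonneg (‖v i‖), norm_nonneg (v i), norm_nonneg (g i)]
  have h1 : (0:ℝ) ≤ ‖w‖ := norm_nonneg _
  have h2 : (0:ℝ) ≤ c * ‖v‖ := mul_nonneg hc (norm_nonneg _)
  nlinarith

lemma eC_cast {N : ℕ} (i : Fin N → Fin 2) :
    (∑ a, eC (i a)) = (((∑ a, eR (i a)) : ℝ) : ℂ) := by
  push_cast [eC]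
  rfl

lemma abs_sum_eR_le {N : ℕ} (i : Fin N → Fin 2) : |∑ a, eR (i a)| ≤ (N : ℝ) := by
  refine (Finset.abs_sum_le_sum_abs _ _).trans ?_
  have h1 : ∀ a : Fin N, |eR (i a)| = 1 := fun a => by unfold eR; split_ifs <;> norm_num
  simp [h1]

lemma entry_bound (J : ℝ) (n : ℕ) (r : ℝ) (hr : |r| ≤ (n:ℝ)+2) :
    |(J/2) * ((r^2 - ((n:ℝ)+2)^2)/(((n:ℝ)+2)^2 * ((n:ℝ)+1)))| ≤ (|J|+1)/((n:ℝ)+2) := by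
  have hn1 : (0:ℝ) < (n:ℝ)+1 := by positivity
  have hn2 : (0:ℝ) < (n:ℝ)+2 := by positivity
  have hr2 : r^2 ≤ ((n:ℝ)+2)^2 := by nlinarith [abs_nonneg r, sq_abs r]
  have habs : |r^2 - ((n:ℝ)+2)^2| = ((n:ℝ)+2)^2 - r^2 := by
    rw [abs_of_nonpos (by linarith)]; ring
  rw [abs_mul, show |J/2| = |J|/2 by rw [abs_div]; norm_num]
  rw [abs_div, habs, abs_of_pos (show (0:ℝ) < ((n:ℝ)+2)^2 * ((n:ℝ)+1) by positivity)]
  rw [div_mul_div_comm, div_le_div_iff₀ (by positivity) hn2]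
  nlinarith [abs_nonneg J, sq_nonneg r, hn2.le,
    mul_nonneg (mul_nonneg (abs_nonneg J) hn2.le) (sq_nonneg r),
    mul_nonneg (mul_nonneg (abs_nonneg J) hn2.le)
      (mul_nonneg hn2.le (Nat.cast_nonneg (α := ℝ) n)),
    mul_pos hn2 hn1, sq_nonneg ((n:ℝ)+2)]

end CWAux


/-- Eq. (3.5) of the paper: there is `C > 0` such that
`‖ h^{CW}_{1/N} − Q_{1/N}(h₀^{CW}) ‖ ≤ C/N` for all `N ≥ 2`, in the operator norm on
`(ℂ²)^{⊗N}`. -/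
theorem curieWeiss_eq_Q_up_to_one_over_N (J B : ℝ) :
    ∃ C : ℝ, 0 < C ∧ ∀ N : ℕ, 2 ≤ N →
      matOpNorm (hCW J B N - Q N (hCW0 J B)) ≤ C / N := by
  refine ⟨|J| + 1, by positivity, fun N hN => ?_⟩
  obtain ⟨n, rfl⟩ : ∃ n, N = n + 2 := ⟨N - 2, by omega⟩
  rw [CWAux.diff_diag J B n]
  have hcast : ((n + 2 : ℕ) : ℝ) = (n:ℝ) + 2 := by push_cast; ring
  rw [hcast]
  refine CWAux.matOpNorm_diagonal_le _ _ (by positivity) (fun i => ?_)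
  set r := ∑ a, CWAux.eR (i a) with hrdef
  have hb := CWAux.abs_sum_eR_le i
  rw [hcast] at hb
  have hent : ((J:ℂ)/2) * (((∑ a, CWAux.eC (i a))^2 - ((n:ℂ)+2)^2) /
      (((n:ℂ)+2)^2 * ((n:ℂ)+1)))
      = (((J/2) * ((r^2 - ((n:ℝ)+2)^2)/(((n:ℝ)+2)^2*((n:ℝ)+1))) : ℝ) : ℂ) := by
    rw [CWAux.eC_cast, ← hrdef]
    push_cast
    ring
  rw [hent, Complex.norm_real]
  exact CWAux.entry_bound J n r hb

end
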